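/- Let m ≥ 1, let (a_t, b_t) for 1 ≤ t ≤ m be pairs of positive integers with a_t b_{t+1} − a_{t+1} b_t ≥ 1 for all t, let A_t be positive integers, and let f = ∏_t (y^{a_t} + x^{b_t})^{A_t}. Fix 1 ≤ i < m and suppose (p,q) = α(a_i,b_i) + β(a_{i+1},b_{i+1}) for some positive integers α, β. Then the minimum of p·u + q·v over the support of f equals p·(Σ_{t≤i} b_t A_t) + q·(Σ_{t>i} a_t A_t), and this equals α·m(P_i) + β·m(P_{i+1}) where m(P_j) = a_j Σ_{t≤j} b_t A_t + b_j Σ_{t>j} a_t A_t. -/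

import Mathlib

open MvPolynomial Finset

/-- The weighted order of a polynomial in two variables with respect to
weights `(p, q)`: the minimum of `p * u + q * v` over the support. -/
noncomputable def weightedOrd (p q : ℕ) (f : MvPolynomial (Fin 2) ℂ) : ℕ :=
  sInf {n | ∃ d ∈ f.support, p * d 0 + q * d 1 = n}

namespace Stmt11Aux

noncomputable def wt (p q : ℕ) (d : Fin 2 →₀ ℕ) : ℕ := p * d 0 + q * d 1

lemma wt_eq_weight (p q : ℕ) (d : Fin 2 →₀ ℕ) :
    Finsupp.weight ![p, q] d = wt p q d := by
  rw [Finsupp.weight_apply, Finsupp.sum_fintype]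
  · simp [wt, Fin.sum_univ_two, mul_comm]
  · intro i; simp

lemma wt_add (p q : ℕ) (d e : Fin 2 →₀ ℕ) : wt p q (d + e) = wt p q d + wt p q e := by
  simp [wt, Finsupp.add_apply]; ring

lemma ord_le {p q : ℕ} {f : MvPolynomial (Fin 2) ℂ} {d : Fin 2 →₀ ℕ}
    (hd : d ∈ f.support) : weightedOrd p q f ≤ wt p q d :=
  Nat.sInf_le ⟨d, hd, rfl⟩

lemma exists_ord {p q : ℕ} {f : MvPolynomial (Fin 2) ℂ} (hf : f ≠ 0) :
    ∃ d ∈ f.support, wt p q d = weightedOrd p q f := by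
  have hne : {n | ∃ d ∈ f.support, p * d 0 + q * d 1 = n}.Nonempty := by
    obtain ⟨d, hd⟩ := (support_nonempty.mpr hf)
    exact ⟨wt p q d, d, hd, rfl⟩
  exact Nat.sInf_mem hne

lemma ord_mul (p q : ℕ) {f g : MvPolynomial (Fin 2) ℂ} (hf : f ≠ 0) (hg : g ≠ 0) :
    weightedOrd p q (f * g) = weightedOrd p q f + weightedOrd p q g := by
  classical
  set nf := weightedOrd p q f
  set ng := weightedOrd p q g
  -- lower bound
  have hlow : ∀ d ∈ (f * g).support, nf + ng ≤ wt p q d := by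
    intro d hd
    rw [mem_support_iff, coeff_mul] at hd
    obtain ⟨xy, hxy, hne⟩ := Finset.exists_ne_zero_of_sum_ne_zero hd
    rw [Finset.HasAntidiagonal.mem_antidiagonal] at hxy
    have hx : xy.1 ∈ f.support := mem_support_iff.mpr fun h => hne (by simp [h])
    have hy : xy.2 ∈ g.support := mem_support_iff.mpr fun h => hne (by simp [h])
    calc nf + ng ≤ wt p q xy.1 + wt p q xy.2 := Nat.add_le_add (ord_le hx) (ord_le hy)
    _ = wt p q d := by rw [← wt_add, hxy]
  -- upper bound via lowest homogeneous components
  set w : Fin 2 → ℕ := ![p, q]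
  set F := weightedHomogeneousComponent w nf f with hF
  set G := weightedHomogeneousComponent w ng g with hG
  have hFne : F ≠ 0 := by
    obtain ⟨d, hd, hwd⟩ := exists_ord (p := p) (q := q) hf
    intro h0
    have : coeff d F = coeff d f := by
      rw [hF, coeff_weightedHomogeneousComponent, if_pos (by rw [wt_eq_weight]; exact hwd)]
    rw [h0] at this
    exact (mem_support_iff.mp hd) (by simpa using this.symm)
  have hGne : G ≠ 0 := by
    obtain ⟨d, hd, hwd⟩ := exists_ord (p := p) (q := q) hg
    intro h0
    have : coeff d G = coeff d g := by
      rw [hG, coeff_weightedHomogeneousComponent, if_pos (by rw [wt_eq_weight]; exact hwd)]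
    rw [h0] at this
    exact (mem_support_iff.mp hd) (by simpa using this.symm)
  have hFGne : F * G ≠ 0 := mul_ne_zero hFne hGne
  have hFGhom : (F * G).IsWeightedHomogeneous w (nf + ng) :=
    (weightedHomogeneousComponent_isWeightedHomogeneous nf f).mul
      (weightedHomogeneousComponent_isWeightedHomogeneous ng g)
  -- coefficients agree at weight nf + ng
  have hcoeff : ∀ d : Fin 2 →₀ ℕ, wt p q d = nf + ng → coeff d (f * g) = coeff d (F * G) := by
    intro d hd
    rw [coeff_mul, coeff_mul]
    apply Finset.sum_congr rfl
    intro xy hxy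
    rw [Finset.HasAntidiagonal.mem_antidiagonal] at hxy
    rw [hF, hG, coeff_weightedHomogeneousComponent, coeff_weightedHomogeneousComponent,
      wt_eq_weight, wt_eq_weight]
    by_cases hx : wt p q xy.1 = nf
    · have hy : wt p q xy.2 = ng := by
        have := wt_add p q xy.1 xy.2
        rw [hxy, hd, hx] at this
        omega
      rw [if_pos hx, if_pos hy]
    · by_cases hxf : coeff xy.1 f = 0
      · rw [hxf]; simp
      · have h1 : nf ≤ wt p q xy.1 := ord_le (mem_support_iff.mpr hxf)
        have h2 : nf < wt p q xy.1 := lt_of_le_of_ne h1 (Ne.symm hx)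
        have hylt : wt p q xy.2 < ng := by
          have := wt_add p q xy.1 xy.2
          rw [hxy, hd] at this
          omega
        have hyg : coeff xy.2 g = 0 := by
          by_contra hne
          exact absurd (ord_le (mem_support_iff.mpr hne)) (not_le.mpr hylt)
        rw [hyg]; simp
  obtain ⟨d, hd⟩ := support_nonempty.mpr hFGne
  have hwd : wt p q d = nf + ng := by
    rw [← wt_eq_weight]; exact hFGhom (mem_support_iff.mp hd)
  have hdfg : d ∈ (f * g).support := by
    rw [mem_support_iff, hcoeff d hwd]
    exact mem_support_iff.mp hd
  obtain ⟨e, he, hwe⟩ := exists_ord (p := p) (q := q) (mul_ne_zero hf hg)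
  exact le_antisymm (hwd ▸ ord_le hdfg) (hwe ▸ hlow e he)

lemma ord_pow (p q : ℕ) {f : MvPolynomial (Fin 2) ℂ} (hf : f ≠ 0) (n : ℕ) :
    weightedOrd p q (f ^ n) = n * weightedOrd p q f := by
  induction n with
  | zero =>
    simp only [pow_zero, zero_mul]
    have h1 : (1 : MvPolynomial (Fin 2) ℂ) ≠ 0 := one_ne_zero
    obtain ⟨d, hd, hwd⟩ := exists_ord (p := p) (q := q) h1
    have : d = 0 := by
      have h := mem_support_iff.mp hd
      rw [MvPolynomial.coeff_one] at h
      by_contra hne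
      simp [Ne.symm hne] at h
    have h0 : wt p q d = 0 := by simp [this, wt]
    omega
  | succ n ih =>
    rw [pow_succ, ord_mul p q (pow_ne_zero n hf) hf, ih]; ring

lemma ord_prod (p q : ℕ) {ι : Type*} (s : Finset ι) (φ : ι → MvPolynomial (Fin 2) ℂ)
    (h : ∀ i ∈ s, φ i ≠ 0) :
    weightedOrd p q (∏ i ∈ s, φ i) = ∑ i ∈ s, weightedOrd p q (φ i) := by
  classical
  induction s using Finset.cons_induction with
  | empty =>
    simp only [Finset.prod_empty, Finset.sum_empty]
    have := ord_pow p q (f := (X 0 : MvPolynomial (Fin 2) ℂ)) (X_ne_zero 0) 0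
    simpa using this
  | cons i s his ih =>
    rw [Finset.prod_cons, Finset.sum_cons,
      ord_mul p q (h i (Finset.mem_cons_self i s))
        (Finset.prod_ne_zero_iff.mpr fun j hj => h j (Finset.mem_cons_of_mem hj)),
      ih fun j hj => h j (Finset.mem_cons_of_mem hj)]

end Stmt11Aux
namespace Stmt11Aux

lemma single_ne {a b : ℕ} (ha : 0 < a) (hb : 0 < b) :
    Finsupp.single (1 : Fin 2) a ≠ Finsupp.single (0 : Fin 2) b := by
  intro hEq
  have := DFunLike.congr_fun hEq 0
  simp [Finsupp.single_apply] at this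
  omega

lemma coeff_binom1 (a b : ℕ) (ha : 0 < a) (hb : 0 < b) :
    coeff (Finsupp.single (1 : Fin 2) a) (X 1 ^ a + X 0 ^ b : MvPolynomial (Fin 2) ℂ) = 1 := by
  classical
  rw [coeff_add, coeff_X_pow, coeff_X_pow, if_pos rfl, if_neg (single_ne ha hb).symm]
  simp

lemma coeff_binom2 (a b : ℕ) (ha : 0 < a) (hb : 0 < b) :
    coeff (Finsupp.single (0 : Fin 2) b) (X 1 ^ a + X 0 ^ b : MvPolynomial (Fin 2) ℂ) = 1 := by
  classical
  rw [coeff_add, coeff_X_pow, coeff_X_pow, if_neg (single_ne ha hb), if_pos rfl]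
  simp

lemma binom_ne_zero {a b : ℕ} (ha : 0 < a) (hb : 0 < b) :
    (X 1 ^ a + X 0 ^ b : MvPolynomial (Fin 2) ℂ) ≠ 0 := by
  intro h0
  have := coeff_binom1 a b ha hb
  rw [h0] at this
  simp at this

lemma wt_single1 (p q a : ℕ) : wt p q (Finsupp.single (1 : Fin 2) a) = q * a := by
  simp [wt, Finsupp.single_apply]

lemma wt_single0 (p q b : ℕ) : wt p q (Finsupp.single (0 : Fin 2) b) = p * b := by
  simp [wt, Finsupp.single_apply]

lemma ord_binom (p q a b : ℕ) (ha : 0 < a) (hb : 0 < b) :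
    weightedOrd p q (X 1 ^ a + X 0 ^ b : MvPolynomial (Fin 2) ℂ) = min (q * a) (p * b) := by
  classical
  have hsupp : ∀ d ∈ (X 1 ^ a + X 0 ^ b : MvPolynomial (Fin 2) ℂ).support,
      d = Finsupp.single (1 : Fin 2) a ∨ d = Finsupp.single (0 : Fin 2) b := by
    intro d hd
    have hcd := mem_support_iff.mp hd
    rw [coeff_add, coeff_X_pow, coeff_X_pow] at hcd
    by_contra hcon
    push_neg at hcon
    rw [if_neg (fun h => hcon.1 h.symm), if_neg (fun h => hcon.2 h.symm)] at hcd
    simp at hcd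
  apply le_antisymm
  · refine le_min ?_ ?_
    · have h1 := ord_le (p := p) (q := q)
        (mem_support_iff.mpr (by rw [coeff_binom1 a b ha hb]; exact one_ne_zero))
      rwa [wt_single1] at h1
    · have h1 := ord_le (p := p) (q := q)
        (mem_support_iff.mpr (by rw [coeff_binom2 a b ha hb]; exact one_ne_zero))
      rwa [wt_single0] at h1
  · obtain ⟨d, hd, hwd⟩ := exists_ord (p := p) (q := q) (binom_ne_zero ha hb)
    rcases hsupp d hd with rfl | rfl
    · rw [← hwd, wt_single1]; exact min_le_left _ _
    · rw [← hwd, wt_single0]; exact min_le_right _ _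

lemma chain (m : ℕ) (a b : ℕ → ℕ)
    (hpos : ∀ t, 1 ≤ t → t ≤ m → 0 < a t ∧ 0 < b t)
    (hdet : ∀ t, 1 ≤ t → t < m → a (t + 1) * b t + 1 ≤ a t * b (t + 1))
    (s : ℕ) (hs : 1 ≤ s) :
    ∀ t, s ≤ t → t ≤ m → a t * b s ≤ a s * b t := by
  intro t hst
  induction t, hst using Nat.le_induction with
  | base => intro _; exact le_refl _
  | succ t ht ih =>
    intro htm
    have htm' : t ≤ m := Nat.le_of_succ_le htm
    have ih' := ih htm'
    have hd := hdet t (le_trans hs ht) (Nat.lt_of_succ_le htm)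
    have hbt : 0 < b t := (hpos t (le_trans hs ht) htm').2
    have key : (a (t + 1) * b s) * b t ≤ (a s * b (t + 1)) * b t := by
      calc (a (t + 1) * b s) * b t = (a (t + 1) * b t) * b s := by ring
        _ ≤ (a t * b (t + 1)) * b s := Nat.mul_le_mul_right _ (by omega)
        _ = (a t * b s) * b (t + 1) := by ring
        _ ≤ (a s * b t) * b (t + 1) := Nat.mul_le_mul_right _ ih'
        _ = (a s * b (t + 1)) * b t := by ring
    exact Nat.le_of_mul_le_mul_right key hbt

end Stmt11Aux

open Stmt11Aux in
theorem stmt11 (m : ℕ) (hm : 1 ≤ m) (a b A : ℕ → ℕ)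
    (hpos : ∀ t, 1 ≤ t → t ≤ m → 0 < a t ∧ 0 < b t)
    (hdet : ∀ t, 1 ≤ t → t < m → a (t + 1) * b t + 1 ≤ a t * b (t + 1))
    (hA : ∀ t, 1 ≤ t → t ≤ m → 0 < A t)
    (i : ℕ) (hi1 : 1 ≤ i) (him : i < m)
    (α β p q : ℕ) (hα : 0 < α) (hβ : 0 < β)
    (hp : p = α * a i + β * a (i + 1)) (hq : q = α * b i + β * b (i + 1)) :
    weightedOrd p q (∏ t ∈ Icc 1 m, (X 1 ^ a t + X 0 ^ b t) ^ A t)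
        = p * (∑ t ∈ Icc 1 i, b t * A t) + q * (∑ t ∈ Icc (i + 1) m, a t * A t) ∧
    p * (∑ t ∈ Icc 1 i, b t * A t) + q * (∑ t ∈ Icc (i + 1) m, a t * A t)
        = α * (a i * ∑ t ∈ Icc 1 i, b t * A t + b i * ∑ t ∈ Icc (i + 1) m, a t * A t)
          + β * (a (i + 1) * ∑ t ∈ Icc 1 (i + 1), b t * A t
            + b (i + 1) * ∑ t ∈ Icc (i + 2) m, a t * A t) := by
  constructor
  · -- first conjunct
    rw [ord_prod p q _ _ (fun t ht => by
      rw [Finset.mem_Icc] at ht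
      exact pow_ne_zero _ (binom_ne_zero (hpos t ht.1 ht.2).1 (hpos t ht.1 ht.2).2))]
    have hterm : ∀ t ∈ Icc 1 m,
        weightedOrd p q ((X 1 ^ a t + X 0 ^ b t) ^ A t)
          = A t * min (q * a t) (p * b t) := by
      intro t ht
      rw [Finset.mem_Icc] at ht
      rw [ord_pow p q (binom_ne_zero (hpos t ht.1 ht.2).1 (hpos t ht.1 ht.2).2),
        ord_binom p q _ _ (hpos t ht.1 ht.2).1 (hpos t ht.1 ht.2).2]
    rw [Finset.sum_congr rfl hterm]
    have hsplit : ∑ t ∈ Icc 1 m, A t * min (q * a t) (p * b t)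
        = ∑ t ∈ Icc 1 i, A t * min (q * a t) (p * b t)
          + ∑ t ∈ Icc (i + 1) m, A t * min (q * a t) (p * b t) := by
      rw [show (1 : ℕ) = 0 + 1 from rfl, Finset.Icc_add_one_left_eq_Ioc, Finset.Icc_add_one_left_eq_Ioc,
        show Icc (i + (0 + 1)) m = Ioc i m by rw [zero_add, Finset.Icc_add_one_left_eq_Ioc], Finset.sum_Ioc_consecutive _ (Nat.zero_le i) (le_of_lt him)]
    rw [hsplit]
    have hL : ∀ t ∈ Icc 1 i, A t * min (q * a t) (p * b t) = A t * (p * b t) := by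
      intro t ht
      rw [Finset.mem_Icc] at ht
      have c1 : a i * b t ≤ a t * b i :=
        chain m a b hpos hdet t ht.1 i ht.2 (le_of_lt him)
      have c2 : a (i + 1) * b t ≤ a t * b (i + 1) :=
        chain m a b hpos hdet t ht.1 (i + 1) (by omega) him
      have hle : p * b t ≤ q * a t := by
        rw [hp, hq]
        nlinarith [Nat.mul_le_mul_left α c1, Nat.mul_le_mul_left β c2]
      rw [min_eq_right hle]
    have hR : ∀ t ∈ Icc (i + 1) m, A t * min (q * a t) (p * b t) = A t * (q * a t) := by
      intro t ht
      rw [Finset.mem_Icc] at ht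
      have c1 : a t * b i ≤ a i * b t :=
        chain m a b hpos hdet i hi1 t (by omega) ht.2
      have c2 : a t * b (i + 1) ≤ a (i + 1) * b t :=
        chain m a b hpos hdet (i + 1) (by omega) t ht.1 ht.2
      have hle : q * a t ≤ p * b t := by
        rw [hp, hq]
        nlinarith [Nat.mul_le_mul_left α c1, Nat.mul_le_mul_left β c2]
      rw [min_eq_left hle]
    rw [Finset.sum_congr rfl hL, Finset.sum_congr rfl hR, Finset.mul_sum, Finset.mul_sum]
    congr 1
    · exact Finset.sum_congr rfl fun t _ => by ring
    · exact Finset.sum_congr rfl fun t _ => by ring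
  · -- second conjunct
    have e1 : ∑ t ∈ Icc 1 (i + 1), b t * A t
        = ∑ t ∈ Icc 1 i, b t * A t + b (i + 1) * A (i + 1) :=
      Finset.sum_Icc_succ_top (by omega) _
    have e2 : ∑ t ∈ Icc (i + 1) m, a t * A t
        = a (i + 1) * A (i + 1) + ∑ t ∈ Icc (i + 2) m, a t * A t := by
      rw [show Icc (i + 1) m = insert (i + 1) (Icc (i + 2) m) from by
          ext x; simp [Finset.mem_Icc, Finset.mem_insert]; omega,
        Finset.sum_insert (by simp [Finset.mem_Icc])]
    rw [e1, e2, hp, hq]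
    ring
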